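/- Let {a_n} ⊂ ℕ with a_n = o(n), let {π(n)} ⊂ (0,1) and {v(n)} ⊂ (0,∞) be sequences with v(n) = o(n), v(n) → ∞, and nπ(n)/v(n) → 1. Then for every θ ∈ ℝ, (1/v(n)) log E[exp(θ · Bin(n - a_n, π(n)))] → e^θ - 1 as n → ∞. -/

import Mathlib

open Filter

/-- The probability that a `Bin(m,p)` random variable equals `i`. -/
noncomputable def binomialP (m : ℕ) (p : ℝ) (i : ℕ) : ℝ :=
  (m.choose i : ℝ) * p ^ i * (1 - p) ^ (m - i)

/-- `E[exp(θ · Bin(m,p))]`. -/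
noncomputable def binomMGF (m : ℕ) (p : ℝ) (θ : ℝ) : ℝ :=
  ∑ i ∈ Finset.range (m + 1), binomialP m p i * Real.exp (θ * i)

lemma binomMGF_eq (m : ℕ) (p θ : ℝ) :
    binomMGF m p θ = (1 - p + p * Real.exp θ) ^ m := by
  rw [show (1 - p + p * Real.exp θ) = (p * Real.exp θ + (1 - p)) by ring, add_pow]
  unfold binomMGF binomialP
  refine Finset.sum_congr rfl fun i _ => ?_
  rw [mul_comm θ (i : ℝ), Real.exp_nat_mul, mul_pow]
  ring

/-- normalized log-moment generating function of
`Bin(n - a_n, π(n))` converges to `e^θ - 1`. -/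
theorem stmt_10 (a : ℕ → ℕ) (π v : ℕ → ℝ)
    (ha : Tendsto (fun n => (a n : ℝ) / (n : ℝ)) atTop (nhds 0))
    (hπ : ∀ n, π n ∈ Set.Ioo (0 : ℝ) 1)
    (hv : ∀ n, 0 < v n)
    (hvn : Tendsto (fun n => v n / (n : ℝ)) atTop (nhds 0))
    (hvinf : Tendsto v atTop atTop)
    (hπv : Tendsto (fun n : ℕ => (n : ℝ) * π n / v n) atTop (nhds 1)) :
    ∀ θ : ℝ, Tendsto
      (fun n => (1 / v n) * Real.log (binomMGF (n - a n) (π n) θ))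
      atTop (nhds (Real.exp θ - 1)) := by
  intro θ
  set c : ℝ := Real.exp θ - 1 with hc
  -- π tends to 0
  have hπ0 : Tendsto π atTop (nhds 0) := by
    have h1 : Tendsto (fun n : ℕ => ((n : ℝ) * π n / v n) * (v n / n)) atTop (nhds (1 * 0)) :=
      hπv.mul hvn
    rw [one_mul] at h1
    apply h1.congr'
    filter_upwards [eventually_ge_atTop 1] with n hn
    have hn0 : (n : ℝ) ≠ 0 := by positivity
    have hv0 : v n ≠ 0 := (hv n).ne'
    field_simp
  -- π tends to 0 within ≠ 0
  have hπ0' : Tendsto π atTop (nhdsWithin 0 {x : ℝ | x ≠ 0}) := by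
    rw [tendsto_nhdsWithin_iff]
    exact ⟨hπ0, Eventually.of_forall fun n => (hπ n).1.ne'⟩
  -- slope limit
  have hF : HasDerivAt (fun x : ℝ => Real.log (1 + x * c)) c 0 := by
    have h1 : HasDerivAt (fun x : ℝ => 1 + x * c) c 0 := by
      simpa using ((hasDerivAt_id 0).mul_const c).const_add 1
    have := h1.log (by norm_num)
    simpa using this
  have hslope : Tendsto (fun n => Real.log (1 + π n * c) / π n) atTop (nhds c) := by
    have h2 := (hasDerivAt_iff_tendsto_slope.mp hF).comp hπ0'
    apply h2.congr
    intro n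
    simp [slope, Real.log_one, div_eq_inv_mul]
  -- factor (1 - a n / n) tends to 1
  have hA : Tendsto (fun n : ℕ => 1 - (a n : ℝ) / n) atTop (nhds 1) := by
    simpa using tendsto_const_nhds.sub ha
  have hprod : Tendsto
      (fun n : ℕ => (1 - (a n : ℝ) / n) * ((n : ℝ) * π n / v n) * (Real.log (1 + π n * c) / π n))
      atTop (nhds c) := by
    have := (hA.mul hπv).mul hslope
    simpa using this
  -- eventually a n < n
  have han : ∀ᶠ n : ℕ in atTop, a n < n := by
    have h1 := ha.eventually (gt_mem_nhds (show (0:ℝ) < 1 by norm_num))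
    filter_upwards [h1, eventually_ge_atTop 1] with n h hn
    have hn0 : (0:ℝ) < n := by exact_mod_cast hn
    have : (a n : ℝ) < n := by
      by_contra hcon
      push_neg at hcon
      have : (1:ℝ) ≤ (a n : ℝ) / n := (one_le_div hn0).mpr hcon
      linarith
    exact_mod_cast this
  rw [show Real.exp θ - 1 = c from rfl] at *
  apply hprod.congr'
  filter_upwards [han, eventually_ge_atTop 1] with n hlt hn
  have hn0 : (n : ℝ) ≠ 0 := by positivity
  have hv0 : v n ≠ 0 := (hv n).ne'
  have hp0 : π n ≠ 0 := (hπ n).1.ne'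
  have hpos : (0:ℝ) < 1 - π n + π n * Real.exp θ := by
    have := (hπ n).2
    have := (hπ n).1
    nlinarith [Real.exp_pos θ]
  rw [binomMGF_eq, Real.log_pow, Nat.cast_sub hlt.le,
    show (1 - π n + π n * Real.exp θ) = 1 + π n * c by rw [hc]; ring]
  field_simp
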